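/- The create_ahdr construction is the inverse of the chain of per-hop header processing steps: let s_0, …, s_{l−1} ∈ {0,1}^k and FS_0, …, FS_{l−1} ∈ {0,1}^{|FS|}, and let (FS_i, γ_i, β_i), 0 ≤ i ≤ l−1, be produced by the create_ahdr construction. Then (a) for every 0 ≤ i ≤ l−1 the MAC verification performed by node i succeeds, i.e., γ_i = MAC(h_MAC(s_i); FS_i ‖ β_i); and (b) for every 0 ≤ i ≤ l−2, the per-hop processing of the header at node i yields exactly the header constructed for node i+1, i.e., (β_i ‖ 0^c) ⊕ PRG2(h_PRG2(s_i)) = FS_{i+1} ‖ γ_{i+1} ‖ β_{i+1}. -/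

import Mathlib

/-- Bit strings: finite sequences of bits. -/
abbrev BS : Type := List Bool

/-- Bitwise XOR of (equal-length) bit strings. -/
def bxor (σ τ : BS) : BS := List.zipWith xor σ τ

/-- Substring from bit position `a` through `b` inclusive (0-indexed). -/
def substr (σ : BS) (a b : ℕ) : BS := (σ.drop a).take (b + 1 - a)

/-- All-zero string of length `a`. -/
def zeros (a : ℕ) : BS := List.replicate a false

lemma length_bxor (a b : BS) : (bxor a b).length = min a.length b.length := by
  simp [bxor]

lemma bxor_drop (a b : BS) (n : ℕ) : (bxor a b).drop n = bxor (a.drop n) (b.drop n) :=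
  List.drop_zipWith

lemma bxor_take (a b : BS) (n : ℕ) : (bxor a b).take n = bxor (a.take n) (b.take n) :=
  List.take_zipWith

lemma bxor_append (a b x y : BS) (h : a.length = x.length) :
    bxor (a ++ b) (x ++ y) = bxor a x ++ bxor b y :=
  List.zipWith_append h

lemma bxor_cancel (a : BS) : ∀ b : BS, b.length = a.length → bxor (bxor a b) b = a := by
  induction a with
  | nil => intro b _; simp [bxor]
  | cons x a ih =>
    intro b h
    cases b with
    | nil => simp at h
    | cons y b =>
      simp only [bxor, List.zipWith_cons_cons, List.cons.injEq]
      refine ⟨by cases x <;> cases y <;> rfl, ?_⟩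
      exact ih b (by simpa using h)

lemma bxor_zeros (n : ℕ) : ∀ y : BS, y.length = n → bxor (zeros n) y = y := by
  induction n with
  | zero => intro y h; rw [List.length_eq_zero_iff] at h; subst h; simp [bxor, zeros]
  | succ n ih =>
    intro y h
    cases y with
    | nil => simp at h
    | cons b y =>
      simp only [zeros, List.replicate_succ, bxor, List.zipWith_cons_cons]
      refine congrArg₂ _ (by cases b <;> rfl) ?_
      exact ih y (by simpa using h)

lemma bxor_trunc (a : BS) : ∀ (b y : BS), y.length ≤ a.length → bxor (a ++ b) y = bxor a y := by
  induction a with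
  | nil => intro b y h
           have : y = [] := List.length_eq_zero_iff.mp (by simpa using h)
           subst this; simp [bxor]
  | cons x a ih =>
    intro b y h
    cases y with
    | nil => simp [bxor]
    | cons z y =>
      simp only [List.cons_append, bxor, List.zipWith_cons_cons]
      exact congrArg _ (ih b y (by simpa using h))

lemma length_zeros (n : ℕ) : (zeros n).length = n := by simp [zeros]

/-- `create_ahdr` is the inverse of the chain of per-hop header
processing steps: (a) every per-hop MAC verification succeeds, and (b) the
per-hop processing `(β i ‖ 0^c) ⊕ PRG2(h_PRG2(s i))` of the header at node `i`
yields exactly the header `FS (i+1) ‖ γ (i+1) ‖ β (i+1)` constructed for node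
`i+1`. -/
theorem create_ahdr_inverse_of_processing
    (k fsl r l : ℕ) (hk : 1 ≤ k) (hfsl : k ≤ fsl) (hr : 1 ≤ r)
    (hl1 : 1 ≤ l) (hlr : l ≤ r)
    (c : ℕ) (hc : c = fsl + k)
    (PRG2 : BS → BS) (hPRG2len : ∀ x, (PRG2 x).length = r * c)
    (MAC : BS → BS → BS) (hMAClen : ∀ key msg, (MAC key msg).length = k)
    (hPRG2 hMAC : BS → BS)
    (hhPRG2len : ∀ x, (hPRG2 x).length = k) (hhMAClen : ∀ x, (hMAC x).length = k)
    (s FS : ℕ → BS)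
    (hs : ∀ i, i < l → (s i).length = k)
    (hFS : ∀ i, i < l → (FS i).length = fsl)
    (φ β γ : ℕ → BS)
    (hφ0 : φ 0 = [])
    (hφ : ∀ i, i + 1 < l → φ (i + 1) =
      bxor (φ i ++ zeros c) (substr (PRG2 (hPRG2 (s i))) ((r - 1 - i) * c) (r * c - 1)))
    (ρ : BS) (hρ : ρ.length = (r - l) * c)
    (hβlast : β (l - 1) = ρ ++ φ (l - 1))
    (hγlast : γ (l - 1) = MAC (hMAC (s (l - 1))) (FS (l - 1) ++ β (l - 1)))
    (hβ : ∀ i, i + 1 < l → β i =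
      bxor (FS (i + 1) ++ γ (i + 1) ++ substr (β (i + 1)) 0 ((r - 2) * c - 1))
           (substr (PRG2 (hPRG2 (s i))) 0 ((r - 1) * c - 1)))
    (hγ : ∀ i, i + 1 < l → γ i = MAC (hMAC (s i)) (FS i ++ β i)) :
    (∀ i, i < l → γ i = MAC (hMAC (s i)) (FS i ++ β i)) ∧
      (∀ i, i + 1 < l →
        bxor (β i ++ zeros c) (PRG2 (hPRG2 (s i)))
          = FS (i + 1) ++ γ (i + 1) ++ β (i + 1)) := by
  have hc1 : 0 < c := by omega
  have hrc1 : 1 ≤ r * c := by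
    have := Nat.mul_le_mul hr hc1
    simpa using this
  have pm : ∀ a b : ℕ, a ≤ b → a * c ≤ b * c := fun a b h => Nat.mul_le_mul_right c h
  have pm1 : ∀ a : ℕ, 1 ≤ a → c ≤ a * c := fun a ha => by simpa using pm 1 a ha
  -- part (a)
  have hγall : ∀ i, i < l → γ i = MAC (hMAC (s i)) (FS i ++ β i) := by
    intro i hi
    rcases Nat.lt_or_ge (i + 1) l with h | h
    · exact hγ i h
    · have : i = l - 1 := by omega
      subst this
      exact hγlast
  have hγlen : ∀ i, i < l → (γ i).length = k := fun i hi => by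
    rw [hγall i hi]; exact hMAClen _ _
  have hFSγlen : ∀ i, i < l → (FS i ++ γ i).length = c := fun i hi => by
    rw [List.length_append, hFS i hi, hγlen i hi, hc]
  -- normalized recurrences
  have hφnorm : ∀ i, i + 1 < l → φ (i + 1) =
      bxor (φ i ++ zeros c) ((PRG2 (hPRG2 (s i))).drop ((r - 1 - i) * c)) := by
    intro i hil
    rw [hφ i hil]
    congr 1
    simp only [substr]
    apply List.take_of_length_le
    rw [List.length_drop, hPRG2len]
    omega
  have hφlen : ∀ j, j < l → (φ j).length = j * c := by
    intro j
    induction j with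
    | zero => intro _; simp [hφ0]
    | succ j ih =>
      intro hj
      rw [hφnorm j hj, length_bxor, List.length_append, List.length_drop, hPRG2len,
          ih (by omega), length_zeros]
      have h1 : (r - 1 - j) * c = r * c - c - j * c := by
        rw [show r - 1 - j = r - (1 + j) by omega, Nat.sub_mul, Nat.add_mul, one_mul]
        omega
      have h2 := pm (j + 1) r (by omega)
      rw [Nat.add_mul, one_mul] at h2
      rw [Nat.add_mul, one_mul]
      omega
  have hβnorm : ∀ j, j + 1 < l → β j =
      bxor ((FS (j + 1) ++ γ (j + 1)) ++ (β (j + 1)).take ((r - 2) * c))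
        ((PRG2 (hPRG2 (s j))).take ((r - 1) * c)) := by
    intro j hjl
    rw [hβ j hjl]
    have hs1 : substr (PRG2 (hPRG2 (s j))) 0 ((r - 1) * c - 1)
        = (PRG2 (hPRG2 (s j))).take ((r - 1) * c) := by
      simp only [substr, List.drop_zero]
      congr 1
      have := pm1 (r - 1) (by omega)
      omega
    rw [hs1]
    simp only [substr, List.drop_zero, Nat.sub_zero]
    rcases Nat.lt_or_ge r 3 with h3 | h3
    · have : r = 2 := by omega
      subst this
      simp only [show (2:ℕ) - 2 = 0 from rfl, show (2:ℕ) - 1 = 1 from rfl, Nat.zero_mul,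
        Nat.zero_sub, Nat.zero_add, Nat.one_mul, List.take_zero, List.append_nil]
      rw [bxor_trunc _ _ _ (by
        rw [List.length_take, hPRG2len, hFSγlen (j + 1) hjl]
        omega)]
    · have : (r - 2) * c - 1 + 1 = (r - 2) * c := by
        have := pm1 (r - 2) (by omega)
        omega
      rw [this]
  have hβlen : ∀ d j, j + 1 + d = l → (β j).length = (r - 1) * c := by
    intro d
    induction d with
    | zero =>
      intro j hj
      have : j = l - 1 := by omega
      subst this
      rw [hβlast, List.length_append, hρ, hφlen (l - 1) (by omega)]
      have h1 : (r - l) * c = r * c - l * c := Nat.sub_mul r l c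
      have h2 : (l - 1) * c = l * c - c := by rw [Nat.sub_mul, one_mul]
      have h3 : (r - 1) * c = r * c - c := by rw [Nat.sub_mul, one_mul]
      have h4 := pm l r hlr
      have h5 := pm1 l hl1
      omega
    | succ d ih =>
      intro j hj
      have hjl : j + 1 < l := by omega
      have hβ1 : (β (j + 1)).length = (r - 1) * c := ih (j + 1) (by omega)
      rw [hβnorm j hjl, length_bxor, List.length_append, List.length_take, List.length_take,
          hβ1, hPRG2len, hFSγlen (j + 1) hjl]
      have e1 : (r - 1) * c = (r - 2) * c + c := by
        have h := Nat.add_mul (r - 2) 1 c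
        rw [one_mul, show r - 2 + 1 = r - 1 by omega] at h
        omega
      have e2 : r * c = (r - 1) * c + c := by
        have h := Nat.add_mul (r - 1) 1 c
        rw [one_mul, show r - 1 + 1 = r by omega] at h
        omega
      omega
  have hInv : ∀ d j, j + 1 + d = l → (β j).drop ((r - 1 - j) * c) = φ j := by
    intro d
    induction d with
    | zero =>
      intro j hj
      have : j = l - 1 := by omega
      subst this
      rw [hβlast]
      exact List.drop_left' (by rw [hρ]; congr 1; omega)
    | succ d ih =>
      intro j hj
      have hjl : j + 1 < l := by omega
      have hIH : (β (j + 1)).drop ((r - 2 - j) * c) = φ (j + 1) := by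
        have h := ih (j + 1) (by omega)
        rwa [show r - 1 - (j + 1) = r - 2 - j by omega] at h
      have hφj : (φ j).length = j * c := hφlen j (by omega)
      have a1 : (r - 1 - j) * c = (r - 2 - j) * c + c := by
        have h := Nat.add_mul (r - 2 - j) 1 c
        rw [one_mul, show r - 2 - j + 1 = r - 1 - j by omega] at h
        omega
      have a2 : (r - 2) * c = (r - 2 - j) * c + j * c := by
        have h := Nat.add_mul (r - 2 - j) j c
        rw [show r - 2 - j + j = r - 2 by omega] at h
        omega
      have a3 : (r - 1) * c = (r - 1 - j) * c + j * c := by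
        have h := Nat.add_mul (r - 1 - j) j c
        rw [show r - 1 - j + j = r - 1 by omega] at h
        omega
      have a4 : r * c = (r - 1) * c + c := by
        have h := Nat.add_mul (r - 1) 1 c
        rw [one_mul, show r - 1 + 1 = r by omega] at h
        omega
      calc (β j).drop ((r - 1 - j) * c)
          = bxor (((FS (j + 1) ++ γ (j + 1)) ++ (β (j + 1)).take ((r - 2) * c)).drop
                ((r - 1 - j) * c))
              (((PRG2 (hPRG2 (s j))).take ((r - 1) * c)).drop ((r - 1 - j) * c)) := by
            rw [hβnorm j hjl, bxor_drop]
        _ = bxor (((β (j + 1)).take ((r - 2) * c)).drop ((r - 2 - j) * c))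
              (((PRG2 (hPRG2 (s j))).drop ((r - 1 - j) * c)).take (j * c)) := by
            congr 1
            · rw [List.drop_append,
                List.drop_eq_nil_of_le (by rw [hFSγlen (j + 1) hjl]; omega),
                hFSγlen (j + 1) hjl, List.nil_append]
              congr 1
              omega
            · rw [List.drop_take]
              congr 1
              omega
        _ = bxor ((φ (j + 1)).take (j * c))
              (((PRG2 (hPRG2 (s j))).drop ((r - 1 - j) * c)).take (j * c)) := by
            congr 1
            rw [List.drop_take, hIH]
            congr 1
            omega
        _ = bxor (bxor (φ j) (((PRG2 (hPRG2 (s j))).drop ((r - 1 - j) * c)).take (j * c)))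
              (((PRG2 (hPRG2 (s j))).drop ((r - 1 - j) * c)).take (j * c)) := by
            congr 1
            rw [hφnorm j hjl, bxor_take, List.take_left' hφj]
        _ = φ j := by
            apply bxor_cancel
            have b0 : r * c = (r - 1 - j) * c + (j * c + c) := by omega
            rw [List.length_take, List.length_drop, hPRG2len, b0,
              Nat.add_sub_cancel_left, hφj]
            omega
  refine ⟨hγall, ?_⟩
  intro i hil
  have hβi : (β i).length = (r - 1) * c := hβlen (l - i - 1) i (by omega)
  have hβ1 : (β (i + 1)).length = (r - 1) * c := hβlen (l - i - 2) (i + 1) (by omega)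
  have hφi : (φ i).length = i * c := hφlen i (by omega)
  have a1 : (r - 1 - i) * c = (r - 2 - i) * c + c := by
    have h := Nat.add_mul (r - 2 - i) 1 c
    rw [one_mul, show r - 2 - i + 1 = r - 1 - i by omega] at h
    omega
  have a2 : (r - 2) * c = (r - 2 - i) * c + i * c := by
    have h := Nat.add_mul (r - 2 - i) i c
    rw [show r - 2 - i + i = r - 2 by omega] at h
    omega
  have a3 : (r - 1) * c = (r - 1 - i) * c + i * c := by
    have h := Nat.add_mul (r - 1 - i) i c
    rw [show r - 1 - i + i = r - 1 by omega] at h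
    omega
  have a4 : r * c = (r - 1) * c + c := by
    have h := Nat.add_mul (r - 1) 1 c
    rw [one_mul, show r - 1 + 1 = r by omega] at h
    omega
  have hT2 : (β (i + 1)).drop ((r - 2) * c) = (PRG2 (hPRG2 (s i))).drop ((r - 1) * c) := by
    have hIH : (β (i + 1)).drop ((r - 2 - i) * c) = φ (i + 1) := by
      have h := hInv (l - i - 2) (i + 1) (by omega)
      rwa [show r - 1 - (i + 1) = r - 2 - i by omega] at h
    calc (β (i + 1)).drop ((r - 2) * c)
        = ((β (i + 1)).drop ((r - 2 - i) * c)).drop (i * c) := by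
          rw [List.drop_drop, ← a2]
      _ = (φ (i + 1)).drop (i * c) := by rw [hIH]
      _ = bxor (zeros c) ((PRG2 (hPRG2 (s i))).drop ((r - 1) * c)) := by
          rw [hφnorm i hil, bxor_drop, List.drop_drop, List.drop_left' hφi, ← a3]
      _ = (PRG2 (hPRG2 (s i))).drop ((r - 1) * c) := by
          apply bxor_zeros
          rw [List.length_drop, hPRG2len]
          omega
  calc bxor (β i ++ zeros c) (PRG2 (hPRG2 (s i)))
      = bxor (β i ++ zeros c)
          ((PRG2 (hPRG2 (s i))).take ((r - 1) * c) ++ (PRG2 (hPRG2 (s i))).drop ((r - 1) * c)) := by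
        rw [List.take_append_drop]
    _ = bxor (β i) ((PRG2 (hPRG2 (s i))).take ((r - 1) * c))
          ++ bxor (zeros c) ((PRG2 (hPRG2 (s i))).drop ((r - 1) * c)) := by
        apply bxor_append
        rw [hβi, List.length_take, hPRG2len]
        omega
    _ = ((FS (i + 1) ++ γ (i + 1)) ++ (β (i + 1)).take ((r - 2) * c))
          ++ (PRG2 (hPRG2 (s i))).drop ((r - 1) * c) := by
        congr 1
        · rw [hβnorm i hil]
          apply bxor_cancel
          rw [List.length_take, hPRG2len, List.length_append, List.length_take, hβ1,
            hFSγlen (i + 1) hil]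
          omega
        · apply bxor_zeros
          rw [List.length_drop, hPRG2len]
          omega
    _ = (FS (i + 1) ++ γ (i + 1))
          ++ ((β (i + 1)).take ((r - 2) * c) ++ (PRG2 (hPRG2 (s i))).drop ((r - 1) * c)) := by
        rw [List.append_assoc]
    _ = FS (i + 1) ++ γ (i + 1) ++ β (i + 1) := by
        rw [← hT2, List.take_append_drop]
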